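/- Suppose the relative interior of conv(X) has nonempty intersection with { x ∈ ℝ^n : Ax ≥ b }. Then v^L = v̄* = v*, where v^L = sup_{λ≥0} inf_{x∈X}(c·x + λ·(b−Ax)), v̄* = inf{ c·x : Ax ≥ b, x ∈ closure(conv X) }, and v* = inf{ c·x : Ax ≥ b, x ∈ conv X }. -/

import Mathlib

open Matrix Finset
variable {n : ℕ}


lemma riC_iff {C : Set (Fin n → ℝ)} {x : Fin n → ℝ} :
    x ∈ intrinsicInterior ℝ C ↔
      x ∈ C ∧ ∃ ε > 0, ∀ y, y ∈ affineSpan ℝ C → dist y x < ε → y ∈ C := by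
  constructor
  · intro hx
    rw [mem_intrinsicInterior] at hx
    obtain ⟨y, hy, rfl⟩ := hx
    have hyC : (y : Fin n → ℝ) ∈ C := by
      have : y ∈ (Subtype.val ⁻¹' C : Set (affineSpan ℝ C)) := interior_subset hy
      exact this
    have hnhds : (Subtype.val ⁻¹' C : Set (affineSpan ℝ C)) ∈ nhds y :=
      mem_interior_iff_mem_nhds.mp hy
    obtain ⟨ε, hε, hball⟩ := Metric.mem_nhds_iff.mp hnhds
    refine ⟨hyC, ε, hε, fun z hz hdist => ?_⟩
    have : (⟨z, hz⟩ : affineSpan ℝ C) ∈ Metric.ball y ε := by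
      rw [Metric.mem_ball, Subtype.dist_eq]
      exact hdist
    exact hball this
  · rintro ⟨hxC, ε, hε, hball⟩
    have hxs : x ∈ affineSpan ℝ C := subset_affineSpan ℝ C hxC
    rw [mem_intrinsicInterior]
    refine ⟨⟨x, hxs⟩, ?_, rfl⟩
    rw [mem_interior_iff_mem_nhds, Metric.mem_nhds_iff]
    refine ⟨ε, hε, fun z hz => ?_⟩
    rw [Metric.mem_ball, Subtype.dist_eq] at hz
    exact hball z z.2 hz

lemma lineMem {C : Set (Fin n → ℝ)} {x y : Fin n → ℝ}
    (hx : x ∈ affineSpan ℝ C) (hy : y ∈ affineSpan ℝ C) (t : ℝ) :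
    x + t • (y - x) ∈ affineSpan ℝ C := by
  have := AffineSubspace.smul_vsub_vadd_mem (affineSpan ℝ C) t hy hx hx
  simpa [vsub_eq_sub, vadd_eq_add, add_comm] using this

lemma smallStep {C : Set (Fin n → ℝ)} {x y : Fin n → ℝ}
    (hx : x ∈ intrinsicInterior ℝ C) (hy : y ∈ affineSpan ℝ C) :
    ∃ t : ℝ, 0 < t ∧ t < 1 ∧
      ∀ s : ℝ, 0 < s → s ≤ t → x + s • (y - x) ∈ intrinsicInterior ℝ C := by
  obtain ⟨hxC, ε, hε, hball⟩ := riC_iff.mp hx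
  have hxs : x ∈ affineSpan ℝ C := subset_affineSpan ℝ C hxC
  set R : ℝ := ‖y - x‖ with hR
  have hR0 : 0 ≤ R := norm_nonneg _
  refine ⟨min (1/2) (ε / (2 * (R + 1))), by positivity, ?_, ?_⟩
  · exact lt_of_le_of_lt (min_le_left _ _) (by norm_num)
  intro s hs hst
  have hsR : s * R < ε := by
    have h1 : s ≤ ε / (2 * (R + 1)) := le_trans hst (min_le_right _ _)
    have h2 : s * R ≤ ε / (2 * (R + 1)) * R := by
      apply mul_le_mul_of_nonneg_right h1 hR0
    have h3 : ε / (2 * (R + 1)) * R < ε := by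
      rw [div_mul_eq_mul_div, div_lt_iff₀ (by positivity)]
      nlinarith
    linarith
  have hz : x + s • (y - x) ∈ affineSpan ℝ C := lineMem hxs hy s
  have hdist : dist (x + s • (y - x)) x = s * R := by
    rw [dist_eq_norm]
    simp [norm_smul, abs_of_pos hs, hR]
  rw [riC_iff]
  refine ⟨hball _ hz (by rw [hdist]; exact hsR), ε - s * R, by linarith, fun z hzs hzd => ?_⟩
  apply hball z hzs
  calc dist z x ≤ dist z (x + s • (y - x)) + dist (x + s • (y - x)) x := dist_triangle _ _ _
    _ < (ε - s * R) + s * R := by rw [hdist]; linarith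
    _ = ε := by ring

lemma affine_zero_of_rip {C : Set (Fin n → ℝ)} {a : Fin n → ℝ} {β : ℝ} {x : Fin n → ℝ}
    (hx : x ∈ intrinsicInterior ℝ C) (hle : ∀ z ∈ C, a ⬝ᵥ z - β ≤ 0)
    (h0 : a ⬝ᵥ x - β = 0) : ∀ z ∈ C, a ⬝ᵥ z - β = 0 := by
  intro z hz
  have hxC : x ∈ C := intrinsicInterior_subset hx
  have hxs : x ∈ affineSpan ℝ C := subset_affineSpan ℝ C hxC
  have hzs : z ∈ affineSpan ℝ C := subset_affineSpan ℝ C hz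
  have hy' : x + (-1 : ℝ) • (z - x) ∈ affineSpan ℝ C := lineMem hxs hzs (-1)
  obtain ⟨t, ht0, _, hmem⟩ := smallStep hx hy'
  have hw := hmem t ht0 le_rfl
  have hwC : x + t • (x + (-1 : ℝ) • (z - x) - x) ∈ C := intrinsicInterior_subset hw
  have hval := hle _ hwC
  have hax : a ⬝ᵥ x = β := by linarith [h0]
  have hexp : a ⬝ᵥ (x + t • (x + (-1 : ℝ) • (z - x) - x)) = a ⬝ᵥ x + t * (β - a ⬝ᵥ z) := by
    rw [dotProduct_add, dotProduct_smul]
    simp only [smul_eq_mul]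
    rw [dotProduct_sub, dotProduct_add, dotProduct_smul, dotProduct_sub]
    simp only [smul_eq_mul]
    rw [hax]; ring
  rw [hexp, hax] at hval
  have h2 := hle z hz
  nlinarith

lemma dot_abs_le (a v : Fin n → ℝ) : |a ⬝ᵥ v| ≤ (∑ i, |a i|) * ‖v‖ := by
  calc |a ⬝ᵥ v| ≤ ∑ i, |a i * v i| := Finset.abs_sum_le_sum_abs _ _
    _ ≤ ∑ i, |a i| * ‖v‖ := by
        apply Finset.sum_le_sum
        intro i _
        rw [abs_mul]
        exact mul_le_mul_of_nonneg_left (by simpa [Real.norm_eq_abs] using norm_le_pi_norm v i)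
          (abs_nonneg _)
    _ = (∑ i, |a i|) * ‖v‖ := by rw [← Finset.sum_mul]

lemma span_subset_hyperplane {C : Set (Fin n → ℝ)} {a : Fin n → ℝ} {β : ℝ} :
    ∀ y ∈ affineSpan ℝ (C ∩ {z | a ⬝ᵥ z = β}), a ⬝ᵥ y = β := by
  intro y hy
  refine affineSpan_induction (p := fun z => a ⬝ᵥ z = β) hy (fun z hz => hz.2) ?_
  intro c u v w hu hv hw
  simp only [vsub_eq_sub, vadd_eq_add, dotProduct_add, dotProduct_smul, dotProduct_sub,
    smul_eq_mul]
  rw [hu, hv, hw]; ring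

lemma ri_inter_hyperplane {C : Set (Fin n → ℝ)} {a : Fin n → ℝ} {β : ℝ} {x : Fin n → ℝ}
    (hx : x ∈ intrinsicInterior ℝ C) (hxa : a ⬝ᵥ x = β) :
    x ∈ intrinsicInterior ℝ (C ∩ {z | a ⬝ᵥ z = β}) := by
  obtain ⟨hxC, ε, hε, hball⟩ := riC_iff.mp hx
  rw [riC_iff]
  refine ⟨⟨hxC, hxa⟩, ε, hε, fun y hy hyd => ?_⟩
  have h1 : y ∈ affineSpan ℝ C := by
    have := affineSpan_mono ℝ (Set.inter_subset_left (s := C) (t := {z | a ⬝ᵥ z = β}))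
    exact this hy
  exact ⟨hball y h1 hyd, span_subset_hyperplane y hy⟩

lemma ri_inter_halfspace {C : Set (Fin n → ℝ)} {a : Fin n → ℝ} {β : ℝ} {x : Fin n → ℝ}
    (hx : x ∈ intrinsicInterior ℝ C) (hxa : 0 < a ⬝ᵥ x - β) :
    x ∈ intrinsicInterior ℝ (C ∩ {z | 0 ≤ a ⬝ᵥ z - β}) := by
  obtain ⟨hxC, ε, hε, hball⟩ := riC_iff.mp hx
  rw [riC_iff]
  set Sa : ℝ := ∑ i, |a i| with hSa
  have hSa0 : 0 ≤ Sa := Finset.sum_nonneg fun i _ => abs_nonneg _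
  refine ⟨⟨hxC, hxa.le⟩, min ε ((a ⬝ᵥ x - β) / (Sa + 1)), by positivity, fun y hy hyd => ?_⟩
  have h1 : y ∈ affineSpan ℝ C := by
    have := affineSpan_mono ℝ (Set.inter_subset_left (s := C) (t := {z | 0 ≤ a ⬝ᵥ z - β}))
    exact this hy
  have hyC : y ∈ C := hball y h1 (lt_of_lt_of_le hyd (min_le_left _ _))
  refine ⟨hyC, ?_⟩
  have hd2 : dist y x < (a ⬝ᵥ x - β) / (Sa + 1) := lt_of_lt_of_le hyd (min_le_right _ _)
  have habs : |a ⬝ᵥ (y - x)| ≤ Sa * ‖y - x‖ := dot_abs_le a (y - x)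
  have hnd : ‖y - x‖ = dist y x := (dist_eq_norm y x).symm
  have hkey : Sa * dist y x < a ⬝ᵥ x - β := by
    calc Sa * dist y x ≤ Sa * ((a ⬝ᵥ x - β) / (Sa + 1)) :=
          mul_le_mul_of_nonneg_left hd2.le hSa0
      _ < a ⬝ᵥ x - β := by
          rw [mul_div_assoc']
          rw [div_lt_iff₀ (by positivity)]
          nlinarith
  have hsub : a ⬝ᵥ y = a ⬝ᵥ x + a ⬝ᵥ (y - x) := by rw [dotProduct_sub]; ring
  rw [hnd] at habs
  have hlow := (abs_le.mp habs).1
  show (0:ℝ) ≤ a ⬝ᵥ y - β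
  linarith

lemma ratio_div_le {a b c d : ℝ} (hb : b < 0) (hd : 0 < d) (h : c * b ≤ a * d) :
    a / b ≤ c / d := by
  have heq : a / b - c / d = (a * d - c * b) / (b * d) := by
    rw [div_sub_div _ _ (ne_of_lt hb) (ne_of_gt hd), mul_comm b c]
  have hden : b * d < 0 := mul_neg_of_neg_of_pos hb hd
  have : (a * d - c * b) / (b * d) ≤ 0 :=
    div_nonpos_of_nonneg_of_nonpos (by linarith) hden.le
  linarith [heq ▸ this]

section oneConstraint
variable {C : Set (Fin n → ℝ)} {a d : Fin n → ℝ} {β δ : ℝ}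

lemma chord (hC : Convex ℝ C)
    (hval0 : ∀ x ∈ C, a ⬝ᵥ x - β = 0 → 0 ≤ d ⬝ᵥ x - δ) :
    ∀ x1 ∈ C, ∀ x2 ∈ C, a ⬝ᵥ x1 - β < 0 → 0 < a ⬝ᵥ x2 - β →
      (d ⬝ᵥ x1 - δ) * (a ⬝ᵥ x2 - β) ≥ (a ⬝ᵥ x1 - β) * (d ⬝ᵥ x2 - δ) := by
  intro x1 h1 x2 h2 hg1 hg2
  set g1 := a ⬝ᵥ x1 - β
  set g2 := a ⬝ᵥ x2 - β
  set θ : ℝ := g2 / (g2 - g1) with hθ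
  have hd0 : (0:ℝ) < g2 - g1 := by linarith
  have hθ0 : 0 < θ := div_pos hg2 hd0
  have hθ1 : θ < 1 := by
    rw [hθ, div_lt_one hd0]; linarith
  have hx0 : θ • x1 + (1 - θ) • x2 ∈ C := hC h1 h2 hθ0.le (by linarith) (by ring)
  have hgx0 : a ⬝ᵥ (θ • x1 + (1 - θ) • x2) - β = θ * g1 + (1 - θ) * g2 := by
    rw [dotProduct_add, dotProduct_smul, dotProduct_smul]
    simp only [smul_eq_mul]; ring
  have hzero : θ * g1 + (1 - θ) * g2 = 0 := by
    rw [hθ]; field_simp; ring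
  have hψ := hval0 _ hx0 (by rw [hgx0, hzero])
  have hψx0 : d ⬝ᵥ (θ • x1 + (1 - θ) • x2) - δ
      = θ * (d ⬝ᵥ x1 - δ) + (1 - θ) * (d ⬝ᵥ x2 - δ) := by
    rw [dotProduct_add, dotProduct_smul, dotProduct_smul]
    simp only [smul_eq_mul]; ring
  rw [hψx0] at hψ
  -- multiply 0 ≤ θ ψ1 + (1-θ) ψ2 by (g2 - g1) > 0
  have hmul : 0 ≤ (θ * (d ⬝ᵥ x1 - δ) + (1 - θ) * (d ⬝ᵥ x2 - δ)) * (g2 - g1) :=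
    mul_nonneg hψ hd0.le
  have hexp : (θ * (d ⬝ᵥ x1 - δ) + (1 - θ) * (d ⬝ᵥ x2 - δ)) * (g2 - g1)
      = g2 * (d ⬝ᵥ x1 - δ) - g1 * (d ⬝ᵥ x2 - δ) := by
    rw [hθ]; field_simp; ring
  rw [hexp] at hmul
  nlinarith [hmul]

lemma lemE (hC : Convex ℝ C) {xh : Fin n → ℝ}
    (hxh : xh ∈ intrinsicInterior ℝ C) (hg0 : a ⬝ᵥ xh - β = 0)
    (hval : ∀ x ∈ C, a ⬝ᵥ x - β = 0 → 0 ≤ d ⬝ᵥ x - δ) :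
    ∃ ν : ℝ, ∀ x ∈ C, ν * (a ⬝ᵥ x - β) ≤ d ⬝ᵥ x - δ := by
  by_cases hneg : ∃ x1 ∈ C, a ⬝ᵥ x1 - β < 0
  · by_cases hpos : ∃ x2 ∈ C, 0 < a ⬝ᵥ x2 - β
    · obtain ⟨x2, hx2C, hx2⟩ := hpos
      set R : Set ℝ := {r | ∃ x ∈ C, a ⬝ᵥ x - β < 0 ∧ r = (d ⬝ᵥ x - δ) / (a ⬝ᵥ x - β)}
        with hR
      have hRne : R.Nonempty := by
        obtain ⟨x1, hx1C, hx1⟩ := hneg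
        exact ⟨_, x1, hx1C, hx1, rfl⟩
      have hub : ∀ r ∈ R, r ≤ (d ⬝ᵥ x2 - δ) / (a ⬝ᵥ x2 - β) := by
        rintro r ⟨x1, hx1C, hx1, rfl⟩
        exact ratio_div_le hx1 hx2
          (by nlinarith [chord hC hval x1 hx1C x2 hx2C hx1 hx2])
      have hbdd : BddAbove R := ⟨_, hub⟩
      refine ⟨sSup R, fun x hx => ?_⟩
      rcases lt_trichotomy (a ⬝ᵥ x - β) 0 with hlt | heq | hgt
      · have hmem : (d ⬝ᵥ x - δ) / (a ⬝ᵥ x - β) ∈ R := ⟨x, hx, hlt, rfl⟩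
        have h1 : (d ⬝ᵥ x - δ) / (a ⬝ᵥ x - β) ≤ sSup R := le_csSup hbdd hmem
        have := mul_le_mul_of_nonpos_right h1 hlt.le
        rwa [div_mul_cancel₀ _ (ne_of_lt hlt)] at this
      · rw [heq, mul_zero]; exact hval x hx heq
      · have h1 : sSup R ≤ (d ⬝ᵥ x - δ) / (a ⬝ᵥ x - β) := by
          apply csSup_le hRne
          rintro r ⟨x1, hx1C, hx1, rfl⟩
          exact ratio_div_le hx1 hgt
            (by nlinarith [chord hC hval x1 hx1C x hx hx1 hgt])
        have := mul_le_mul_of_nonneg_right h1 hgt.le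
        rwa [div_mul_cancel₀ _ (ne_of_gt hgt)] at this
    · push_neg at hpos
      have hzero := affine_zero_of_rip hxh (fun z hz => hpos z hz) hg0
      obtain ⟨x1, hx1C, hx1⟩ := hneg
      exact absurd (hzero x1 hx1C) (ne_of_lt hx1)
  · push_neg at hneg
    have hzero := affine_zero_of_rip (a := -a) (β := -β) hxh
      (fun z hz => by
        have := hneg z hz
        simp only [neg_dotProduct]
        linarith)
      (by simp only [neg_dotProduct]; linarith)
    refine ⟨0, fun x hx => ?_⟩
    rw [zero_mul]
    apply hval x hx
    have := hzero x hx
    simp only [neg_dotProduct] at this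
    linarith

lemma lemI (hC : Convex ℝ C) {xs : Fin n → ℝ}
    (hxs : xs ∈ C) (hgs : 0 < a ⬝ᵥ xs - β)
    (hval : ∀ x ∈ C, 0 ≤ a ⬝ᵥ x - β → 0 ≤ d ⬝ᵥ x - δ) :
    ∃ ν : ℝ, 0 ≤ ν ∧ ∀ x ∈ C, ν * (a ⬝ᵥ x - β) ≤ d ⬝ᵥ x - δ := by
  have hval0 : ∀ x ∈ C, a ⬝ᵥ x - β = 0 → 0 ≤ d ⬝ᵥ x - δ :=
    fun x hx hx0 => hval x hx (le_of_eq hx0.symm)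
  by_cases hneg : ∃ x1 ∈ C, a ⬝ᵥ x1 - β < 0
  · set R : Set ℝ := {r | ∃ x ∈ C, a ⬝ᵥ x - β < 0 ∧ r = (d ⬝ᵥ x - δ) / (a ⬝ᵥ x - β)}
      with hR
    have hRne : R.Nonempty := by
      obtain ⟨x1, hx1C, hx1⟩ := hneg
      exact ⟨_, x1, hx1C, hx1, rfl⟩
    have hub : ∀ r ∈ R, r ≤ (d ⬝ᵥ xs - δ) / (a ⬝ᵥ xs - β) := by
      rintro r ⟨x1, hx1C, hx1, rfl⟩
      exact ratio_div_le hx1 hgs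
        (by nlinarith [chord hC hval0 x1 hx1C xs hxs hx1 hgs])
    have hbdd : BddAbove R := ⟨_, hub⟩
    refine ⟨max 0 (sSup R), le_max_left _ _, fun x hx => ?_⟩
    rcases lt_trichotomy (a ⬝ᵥ x - β) 0 with hlt | heq | hgt
    · have hmem : (d ⬝ᵥ x - δ) / (a ⬝ᵥ x - β) ∈ R := ⟨x, hx, hlt, rfl⟩
      have h1 : (d ⬝ᵥ x - δ) / (a ⬝ᵥ x - β) ≤ max 0 (sSup R) :=
        le_trans (le_csSup hbdd hmem) (le_max_right _ _)
      have := mul_le_mul_of_nonpos_right h1 hlt.le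
      rwa [div_mul_cancel₀ _ (ne_of_lt hlt)] at this
    · rw [heq, mul_zero]; exact hval0 x hx heq
    · have h1 : max 0 (sSup R) ≤ (d ⬝ᵥ x - δ) / (a ⬝ᵥ x - β) := by
        apply max_le
        · exact div_nonneg (hval x hx hgt.le) hgt.le
        · apply csSup_le hRne
          rintro r ⟨x1, hx1C, hx1, rfl⟩
          exact ratio_div_le hx1 hgt
            (by nlinarith [chord hC hval0 x1 hx1C x hx hx1 hgt])
      have := mul_le_mul_of_nonneg_right h1 hgt.le
      rwa [div_mul_cancel₀ _ (ne_of_gt hgt)] at this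
  · push_neg at hneg
    refine ⟨0, le_refl _, fun x hx => ?_⟩
    rw [zero_mul]
    exact hval x hx (hneg x hx)

end oneConstraint

variable {m n : ℕ}

lemma dot_lin (a : Fin n → ℝ) : IsLinearMap ℝ (fun z : Fin n → ℝ => a ⬝ᵥ z) :=
  ⟨fun x y => dotProduct_add a x y, fun c x => by rw [dotProduct_smul]⟩

lemma sum_dotProduct' {k : Type*} (s : Finset k) (u : k → Fin n → ℝ) (v : Fin n → ℝ) :
    (∑ i ∈ s, u i) ⬝ᵥ v = ∑ i ∈ s, u i ⬝ᵥ v := by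
  simp only [dotProduct, Finset.sum_apply, Finset.sum_mul]
  exact Finset.sum_comm

lemma expand_aff (A : Matrix (Fin m) (Fin n) ℝ) (b : Fin m → ℝ) (d : Fin n → ℝ) (δ : ℝ)
    (lam : Fin m → ℝ) (x : Fin n → ℝ) :
    (d - ∑ j, lam j • A j) ⬝ᵥ x - (δ - ∑ j, lam j * b j)
      = (d ⬝ᵥ x - δ) - ∑ j, lam j * (A j ⬝ᵥ x - b j) := by
  rw [sub_dotProduct, sum_dotProduct']
  simp only [smul_dotProduct, smul_eq_mul, mul_sub]
  rw [Finset.sum_sub_distrib]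
  ring

lemma peel (A : Matrix (Fin m) (Fin n) ℝ) (b : Fin m → ℝ) :
    ∀ (E S : Finset (Fin m)), Disjoint E S →
    ∀ (C : Set (Fin n → ℝ)), Convex ℝ C →
    ∀ (d : Fin n → ℝ) (δ : ℝ) (xs : Fin n → ℝ), xs ∈ intrinsicInterior ℝ C →
    (∀ i ∈ E, A i ⬝ᵥ xs - b i = 0) → (∀ j ∈ S, 0 < A j ⬝ᵥ xs - b j) →
    (∀ x ∈ C, (∀ i ∈ E, A i ⬝ᵥ x - b i = 0) → (∀ j ∈ S, 0 ≤ A j ⬝ᵥ x - b j) →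
      0 ≤ d ⬝ᵥ x - δ) →
    ∃ lam : Fin m → ℝ, (∀ j ∈ S, 0 ≤ lam j) ∧ (∀ j, j ∉ E → j ∉ S → lam j = 0) ∧
      ∀ x ∈ C, ∑ j, lam j * (A j ⬝ᵥ x - b j) ≤ d ⬝ᵥ x - δ := by
  intro E
  induction E using Finset.induction_on with
  | empty =>
    intro S
    induction S using Finset.induction_on with
    | empty =>
      intro _ C hC d δ xs hxs hE hS hval
      refine ⟨0, by simp, by simp, fun x hx => ?_⟩
      simp only [Pi.zero_apply, zero_mul, Finset.sum_const_zero]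
      exact hval x hx (by simp) (by simp)
    | @insert j0 S hj0 ihS =>
      intro hdisj C hC d δ xs hxs hE hS hval
      -- restrict to halfspace
      set C' : Set (Fin n → ℝ) := C ∩ {z | 0 ≤ A j0 ⬝ᵥ z - b j0} with hC'
      have hC'conv : Convex ℝ C' := by
        apply hC.inter
        have : {z : Fin n → ℝ | 0 ≤ A j0 ⬝ᵥ z - b j0} = {z | b j0 ≤ A j0 ⬝ᵥ z} := by
          ext z; simp [sub_nonneg]
        rw [this]
        exact convex_halfSpace_ge (dot_lin (A j0)) (b j0)
      have hxs' : xs ∈ intrinsicInterior ℝ C' :=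
        ri_inter_halfspace hxs (hS j0 (Finset.mem_insert_self _ _))
      obtain ⟨lam', hlam'S, hlam'supp, hlam'ineq⟩ :=
        ihS (by simp) C' hC'conv d δ xs hxs' hE
          (fun j hj => hS j (Finset.mem_insert_of_mem hj))
          (fun x hx hE' hS' => hval x hx.1 hE' (fun j hj => by
            rcases Finset.mem_insert.mp hj with rfl | hj
            · exact hx.2
            · exact hS' j hj))
      -- now peel constraint j0 with lemI on C
      have hxsC : xs ∈ C := intrinsicInterior_subset hxs
      obtain ⟨ν, hν0, hνineq⟩ := lemI (a := A j0) (β := b j0)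
        (d := d - ∑ j, lam' j • A j) (δ := δ - ∑ j, lam' j * b j) hC hxsC
        (hS j0 (Finset.mem_insert_self _ _))
        (fun x hx hge => by
          rw [expand_aff, sub_nonneg]
          exact hlam'ineq x ⟨hx, hge⟩)
      have hj0S : j0 ∉ S := hj0
      refine ⟨fun j => lam' j + if j = j0 then ν else 0, ?_, ?_, ?_⟩
      · intro j hj
        rcases Finset.mem_insert.mp hj with rfl | hj
        · have : lam' j = 0 := hlam'supp j (by simp) hj0S
          simp [this, hν0]
        · have hjne : j ≠ j0 := fun h => hj0 (h ▸ hj)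
          simp only [hjne, if_false, add_zero]
          exact hlam'S j hj
      · intro j hjE hjS
        have hjne : j ≠ j0 := fun h => hjS (h ▸ Finset.mem_insert_self _ _)
        have hjS' : j ∉ S := fun h => hjS (Finset.mem_insert_of_mem h)
        simp only [hjne, if_false, add_zero]
        exact hlam'supp j hjE hjS'
      · intro x hx
        have hkey := hνineq x hx
        rw [expand_aff] at hkey
        have hsum : ∑ j, (lam' j + if j = j0 then ν else 0) * (A j ⬝ᵥ x - b j)
            = (∑ j, lam' j * (A j ⬝ᵥ x - b j)) + ν * (A j0 ⬝ᵥ x - b j0) := by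
          simp only [add_mul, Finset.sum_add_distrib, ite_mul, zero_mul]
          congr 1
          rw [Finset.sum_ite_eq' Finset.univ j0 (fun j => ν * (A j ⬝ᵥ x - b j))]
          simp
        rw [hsum]
        linarith
  | @insert i0 E hi0 ihE =>
    intro S hdisj C hC d δ xs hxs hE hS hval
    set C' : Set (Fin n → ℝ) := C ∩ {z | A i0 ⬝ᵥ z = b i0} with hC'
    have hC'conv : Convex ℝ C' := hC.inter (convex_hyperplane (dot_lin (A i0)) (b i0))
    have hi0E : A i0 ⬝ᵥ xs - b i0 = 0 := hE i0 (Finset.mem_insert_self _ _)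
    have hxs' : xs ∈ intrinsicInterior ℝ C' :=
      ri_inter_hyperplane hxs (by linarith)
    have hdisj' : Disjoint E S := by
      apply Finset.disjoint_of_subset_left (Finset.subset_insert i0 E) hdisj
    obtain ⟨lam', hlam'S, hlam'supp, hlam'ineq⟩ :=
      ihE S hdisj' C' hC'conv d δ xs hxs'
        (fun i hi => hE i (Finset.mem_insert_of_mem hi))
        hS
        (fun x hx hE' hS' => hval x hx.1 (fun i hi => by
          rcases Finset.mem_insert.mp hi with rfl | hi
          · have := hx.2; simp only [Set.mem_setOf_eq] at this; linarith
          · exact hE' i hi) hS')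
    obtain ⟨ν, hνineq⟩ := lemE (a := A i0) (β := b i0)
      (d := d - ∑ j, lam' j • A j) (δ := δ - ∑ j, lam' j * b j) hC hxs hi0E
      (fun x hx h0 => by
        rw [expand_aff, sub_nonneg]
        exact hlam'ineq x ⟨hx, by simp only [Set.mem_setOf_eq]; linarith⟩)
    have hi0S : i0 ∉ S := Finset.disjoint_left.mp hdisj (Finset.mem_insert_self _ _)
    refine ⟨fun j => lam' j + if j = i0 then ν else 0, ?_, ?_, ?_⟩
    · intro j hj
      have hjne : j ≠ i0 := fun h => hi0S (h ▸ hj)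
      simp only [hjne, if_false, add_zero]
      exact hlam'S j hj
    · intro j hjE hjS
      have hjne : j ≠ i0 := fun h => hjE (h ▸ Finset.mem_insert_self _ _)
      have hjE' : j ∉ E := fun h => hjE (Finset.mem_insert_of_mem h)
      simp only [hjne, if_false, add_zero]
      exact hlam'supp j hjE' hjS
    · intro x hx
      have hkey := hνineq x hx
      rw [expand_aff] at hkey
      have hsum : ∑ j, (lam' j + if j = i0 then ν else 0) * (A j ⬝ᵥ x - b j)
          = (∑ j, lam' j * (A j ⬝ᵥ x - b j)) + ν * (A i0 ⬝ᵥ x - b i0) := by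
        simp only [add_mul, Finset.sum_add_distrib, ite_mul, zero_mul]
        congr 1
        rw [Finset.sum_ite_eq' Finset.univ i0 (fun j => ν * (A j ⬝ᵥ x - b j))]
        simp
      rw [hsum]
      linarith

lemma farkas : ∀ (m : ℕ) {N : ℕ} (u : Fin m → Fin N → ℝ) (p : Fin N → ℝ),
    (∃ l : Fin m → ℝ, (∀ j, 0 ≤ l j) ∧ ∑ j, l j • u j = p) ∨
    (∃ φ : Fin N → ℝ, (∀ j, 0 ≤ u j ⬝ᵥ φ) ∧ p ⬝ᵥ φ < 0) := by
  intro m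
  induction m with
  | zero =>
    intro N u p
    by_cases hp : p = 0
    · exact Or.inl ⟨0, fun j => le_refl _, by simp [hp]⟩
    · refine Or.inr ⟨-p, fun j => j.elim0, ?_⟩
      have h0 : p ⬝ᵥ p ≠ 0 := fun h => hp (dotProduct_self_eq_zero.mp h)
      have h2 : 0 ≤ p ⬝ᵥ p := Finset.sum_nonneg fun i _ => mul_self_nonneg _
      have h1 : 0 < p ⬝ᵥ p := lt_of_le_of_ne h2 (Ne.symm h0)
      simpa [dotProduct_neg] using neg_neg_iff_pos.mpr h1
  | succ m ih =>
    intro N u p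
    set u0 : Fin m → Fin N → ℝ := fun j => u j.castSucc with hu0
    set ul : Fin N → ℝ := u (Fin.last m) with hul
    rcases ih u0 p with ⟨l, hl, hsum⟩ | ⟨φ, hφ, hpφ⟩
    · refine Or.inl ⟨Fin.snoc l 0, fun j => ?_, ?_⟩
      · induction j using Fin.lastCases with
        | last => simp
        | cast i => simpa using hl i
      · rw [Fin.sum_univ_castSucc]
        simp [Fin.snoc_castSucc, hsum]
        exact hsum
    · by_cases hlast : 0 ≤ ul ⬝ᵥ φ
      · refine Or.inr ⟨φ, fun j => ?_, hpφ⟩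
        induction j using Fin.lastCases with
        | last => exact hlast
        | cast i => exact hφ i
      push_neg at hlast
      set β : ℝ := ul ⬝ᵥ φ with hβ
      set w : Fin m → Fin N → ℝ := fun j => β • u0 j - (u0 j ⬝ᵥ φ) • ul with hw
      set p' : Fin N → ℝ := β • p - (p ⬝ᵥ φ) • ul with hp'
      rcases ih w p' with ⟨μ, hμ, hsumw⟩ | ⟨ψ, hψ, hp'ψ⟩
      · set γ : ℝ := (p ⬝ᵥ φ - ∑ j, μ j * (u0 j ⬝ᵥ φ)) / β with hγ
        have hγpos : 0 ≤ γ := by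
          have hnum : p ⬝ᵥ φ - ∑ j, μ j * (u0 j ⬝ᵥ φ) ≤ 0 := by
            have : 0 ≤ ∑ j, μ j * (u0 j ⬝ᵥ φ) :=
              Finset.sum_nonneg fun j _ => mul_nonneg (hμ j) (hφ j)
            linarith
          exact div_nonneg_iff.mpr (Or.inr ⟨hnum, hlast.le⟩)
        refine Or.inl ⟨Fin.snoc μ γ, fun j => ?_, ?_⟩
        · induction j using Fin.lastCases with
          | last => simpa using hγpos
          | cast i => simpa using hμ i
        · have hβne : β ≠ 0 := ne_of_lt hlast
          apply smul_right_injective (Fin N → ℝ) hβne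
          rw [Fin.sum_univ_castSucc]
          simp only [Fin.snoc_castSucc, Fin.snoc_last]
          have expand : β • (∑ i : Fin m, μ i • u0 i) = p' + (∑ j, μ j * (u0 j ⬝ᵥ φ)) • ul := by
            rw [Finset.smul_sum]
            have : ∀ i : Fin m, β • μ i • u0 i = μ i • w i + (μ i * (u0 i ⬝ᵥ φ)) • ul := by
              intro i
              rw [hw]
              simp only [smul_sub]
              rw [smul_comm]
              module
            rw [Finset.sum_congr rfl (fun i _ => this i), Finset.sum_add_distrib, hsumw,
              ← Finset.sum_smul]
          rw [show u (Fin.last m) = ul from rfl, smul_add, expand, hp', smul_smul]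
          have hβγ : β * γ = p ⬝ᵥ φ - ∑ j, μ j * (u0 j ⬝ᵥ φ) := by
            rw [hγ, mul_div_cancel₀ _ hβne]
          rw [hβγ]
          module
      · refine Or.inr ⟨β • ψ - (ul ⬝ᵥ ψ) • φ, fun j => ?_, ?_⟩
        · induction j using Fin.lastCases with
          | last =>
            simp only [dotProduct_sub, dotProduct_smul, smul_eq_mul, ← hul, ← hβ]
            ring_nf
            exact le_refl _
          | cast i =>
            have := hψ i
            rw [hw] at this
            simp only [sub_dotProduct, smul_dotProduct, smul_eq_mul] at this
            simp only [dotProduct_sub, dotProduct_smul, smul_eq_mul, ← hβ]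
            have h2 : u i.castSucc = u0 i := rfl
            rw [h2]
            linarith
        · have := hp'ψ
          rw [hp'] at this
          simp only [sub_dotProduct, smul_dotProduct, smul_eq_mul] at this
          simp only [dotProduct_sub, dotProduct_smul, smul_eq_mul]
          linarith
section maxpt
variable {m n : ℕ}
lemma dot_line (a x y : Fin n → ℝ) (t β : ℝ) :
    a ⬝ᵥ (x + t • (y - x)) - β = (1 - t) * (a ⬝ᵥ x - β) + t * (a ⬝ᵥ y - β) := by
  rw [dotProduct_add, dotProduct_smul, dotProduct_sub]
  simp only [smul_eq_mul]
  ring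

lemma dotProduct_sum' {k : Type*} (s : Finset k) (v : Fin n → ℝ) (u : k → Fin n → ℝ) :
    v ⬝ᵥ (∑ i ∈ s, u i) = ∑ i ∈ s, v ⬝ᵥ u i := by
  simp only [dotProduct, Finset.sum_apply, Finset.mul_sum]
  exact Finset.sum_comm

lemma exists_maximal_slater (A : Matrix (Fin m) (Fin n) ℝ) (b : Fin m → ℝ)
    {C : Set (Fin n → ℝ)} {xh : Fin n → ℝ}
    (hxh : xh ∈ intrinsicInterior ℝ C) (hfeas : ∀ j, 0 ≤ A j ⬝ᵥ xh - b j) :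
    ∃ xs, xs ∈ intrinsicInterior ℝ C ∧ (∀ j, 0 ≤ A j ⬝ᵥ xs - b j) ∧
      ∀ y, y ∈ intrinsicInterior ℝ C → (∀ j, 0 ≤ A j ⬝ᵥ y - b j) →
        ∀ i, 0 < A i ⬝ᵥ y - b i → 0 < A i ⬝ᵥ xs - b i := by
  classical
  set T : Set (Finset (Fin m)) :=
    {s | ∃ y, y ∈ intrinsicInterior ℝ C ∧ (∀ j, 0 ≤ A j ⬝ᵥ y - b j) ∧
      ∀ i, i ∈ s ↔ 0 < A i ⬝ᵥ y - b i} with hT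
  have hTne : T.Nonempty := by
    refine ⟨Finset.univ.filter (fun i => 0 < A i ⬝ᵥ xh - b i), xh, hxh, hfeas, fun i => ?_⟩
    simp
  obtain ⟨s0, hs0T, hmax⟩ := Set.Finite.exists_maximalFor Finset.card T (Set.toFinite T) hTne
  obtain ⟨xs, hxs, hxsfeas, hxsiff⟩ := hs0T
  refine ⟨xs, hxs, hxsfeas, fun y hy hyfeas i hi => ?_⟩
  by_contra hnot
  have hiE : ¬ (0 < A i ⬝ᵥ xs - b i) := hnot
  have hins0 : i ∉ s0 := fun h => hiE ((hxsiff i).mp h)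
  -- move slightly from xs towards y
  have hyspan : y ∈ affineSpan ℝ C := subset_affineSpan ℝ C (intrinsicInterior_subset hy)
  obtain ⟨t, ht0, ht1, hmem⟩ := smallStep hxs hyspan
  set z := xs + t • (y - xs) with hz
  have hzri : z ∈ intrinsicInterior ℝ C := hmem t ht0 le_rfl
  have hzval : ∀ j, A j ⬝ᵥ z - b j
      = (1 - t) * (A j ⬝ᵥ xs - b j) + t * (A j ⬝ᵥ y - b j) := fun j => dot_line _ _ _ _ _
  have hzfeas : ∀ j, 0 ≤ A j ⬝ᵥ z - b j := by
    intro j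
    rw [hzval j]
    have := hxsfeas j; have := hyfeas j
    nlinarith
  set s1 : Finset (Fin m) := Finset.univ.filter (fun i => 0 < A i ⬝ᵥ z - b i) with hs1
  have hs1T : s1 ∈ T := ⟨z, hzri, hzfeas, fun i => by simp [hs1]⟩
  have hsub : insert i s0 ⊆ s1 := by
    intro k hk
    rcases Finset.mem_insert.mp hk with rfl | hk
    · simp only [hs1, Finset.mem_filter, Finset.mem_univ, true_and]
      rw [hzval k]
      have h1 := hxsfeas k
      nlinarith
    · simp only [hs1, Finset.mem_filter, Finset.mem_univ, true_and]
      rw [hzval k]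
      have h1 := (hxsiff k).mp hk
      have h2 := hyfeas k
      nlinarith
  have hcard : s0.card < s1.card := by
    calc s0.card < (insert i s0).card := by rw [Finset.card_insert_of_notMem hins0]; omega
      _ ≤ s1.card := Finset.card_le_card hsub
  exact absurd (hmax hs1T hcard.le) (not_le.mpr hcard)
end maxpt
section vc
variable {m n : ℕ}
lemma vanishing_combo (A : Matrix (Fin m) (Fin n) ℝ) (b : Fin m → ℝ)
    {C : Set (Fin n → ℝ)} {xs : Fin n → ℝ}
    (hxs : xs ∈ intrinsicInterior ℝ C) (hfeas : ∀ j, 0 ≤ A j ⬝ᵥ xs - b j)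
    (hext : ∀ i, A i ⬝ᵥ xs - b i = 0 → ∀ y, y ∈ affineSpan ℝ C →
      (∀ j, 0 ≤ A j ⬝ᵥ y - b j) → A i ⬝ᵥ y - b i = 0)
    (i0 : Fin m) (hi0 : A i0 ⬝ᵥ xs - b i0 = 0) :
    ∃ lam0 : Fin m → ℝ, (∀ j, 0 ≤ lam0 j) ∧ 1 ≤ lam0 i0 ∧
      (∀ j, lam0 j ≠ 0 → A j ⬝ᵥ xs - b j = 0) ∧
      ∀ y, y ∈ affineSpan ℝ C → ∑ j, lam0 j * (A j ⬝ᵥ y - b j) = 0 := by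
  classical
  have hxsC : xs ∈ C := intrinsicInterior_subset hxs
  have hxsspan : xs ∈ affineSpan ℝ C := subset_affineSpan ℝ C hxsC
  set W := (affineSpan ℝ C).direction with hW
  set k := Module.finrank ℝ W with hk
  set bW : Module.Basis (Fin k) ℝ W := Module.finBasis ℝ W with hbW
  set u : Fin m → (Fin (k+1) → ℝ) :=
    fun j => Fin.snoc (fun i => A j ⬝ᵥ (bW i : Fin n → ℝ)) (A j ⬝ᵥ xs - b j) with hu
  have hucast : ∀ j i, u j (Fin.castSucc i) = A j ⬝ᵥ (bW i : Fin n → ℝ) := by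
    intro j i; simp [hu]
  have hulast : ∀ j, u j (Fin.last k) = A j ⬝ᵥ xs - b j := by
    intro j; simp [hu]
  rcases farkas m u (-u i0) with ⟨l, hl, hsum⟩ | ⟨φ, hφ, hpφ⟩
  · -- success : positive vanishing combination
    set lam0 : Fin m → ℝ := fun j => l j + if j = i0 then 1 else 0 with hlam0
    have hlampos : ∀ j, 0 ≤ lam0 j := by
      intro j
      have h1 := hl j
      by_cases h : j = i0
      · subst h
        have h2 : lam0 j = l j + 1 := by simp [hlam0]
        rw [h2]
        linarith
      · simp only [hlam0, h, if_false, add_zero]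
        exact h1
    have hcoord : ∀ q : Fin (k+1), ∑ j, lam0 j * u j q = 0 := by
      intro q
      have := congrFun hsum q
      simp only [Finset.sum_apply, Pi.smul_apply, smul_eq_mul, Pi.neg_apply] at this
      have hexp : ∑ j, lam0 j * u j q
          = (∑ j, l j * u j q) + ∑ j, (if j = i0 then 1 else 0) * u j q := by
        simp only [hlam0, add_mul, Finset.sum_add_distrib]
      rw [hexp, this]
      simp only [ite_mul, one_mul, zero_mul]
      rw [Finset.sum_ite_eq' Finset.univ i0 (fun j => u j q)]
      simp
    have hlast : ∑ j, lam0 j * (A j ⬝ᵥ xs - b j) = 0 := by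
      have := hcoord (Fin.last k)
      simpa only [hulast] using this
    have hsupp : ∀ j, lam0 j ≠ 0 → A j ⬝ᵥ xs - b j = 0 := by
      intro j hj
      have hterm : ∀ i ∈ Finset.univ, 0 ≤ lam0 i * (A i ⬝ᵥ xs - b i) :=
        fun i _ => mul_nonneg (hlampos i) (hfeas i)
      have := (Finset.sum_eq_zero_iff_of_nonneg hterm).mp hlast j (Finset.mem_univ j)
      rcases mul_eq_zero.mp this with h | h
      · exact absurd h hj
      · exact h
    have hlami0 : lam0 i0 = l i0 + 1 := by simp [hlam0]
    refine ⟨lam0, hlampos, by rw [hlami0]; linarith [hl i0], hsupp, fun y hy => ?_⟩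
    have hdir : y - xs ∈ W := by
      rw [hW]
      have := AffineSubspace.vsub_mem_direction hy hxsspan
      simpa [vsub_eq_sub] using this
    set wv : W := ⟨y - xs, hdir⟩ with hwv
    have hrepr : (wv : Fin n → ℝ) = ∑ i, (bW.repr wv i) • (bW i : Fin n → ℝ) := by
      conv_lhs => rw [← bW.sum_repr wv]
      push_cast
      rfl
    have hAjy : ∀ j, A j ⬝ᵥ y - b j
        = (A j ⬝ᵥ xs - b j) + ∑ i, (bW.repr wv i) * (A j ⬝ᵥ (bW i : Fin n → ℝ)) := by
      intro j
      have h1 : A j ⬝ᵥ y = A j ⬝ᵥ xs + A j ⬝ᵥ (y - xs) := by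
        rw [dotProduct_sub]; ring
      have h2 : A j ⬝ᵥ (y - xs) = ∑ i, (bW.repr wv i) * (A j ⬝ᵥ (bW i : Fin n → ℝ)) := by
        have : (y - xs) = (wv : Fin n → ℝ) := rfl
        rw [this, hrepr, dotProduct_sum']
        congr 1; ext i
        rw [dotProduct_smul, smul_eq_mul]
      rw [h1, h2]; ring
    calc ∑ j, lam0 j * (A j ⬝ᵥ y - b j)
        = ∑ j, (lam0 j * (A j ⬝ᵥ xs - b j)
            + ∑ i, (bW.repr wv i) * (lam0 j * (A j ⬝ᵥ (bW i : Fin n → ℝ)))) := by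
          apply Finset.sum_congr rfl
          intro j _
          rw [hAjy j, mul_add, Finset.mul_sum]
          congr 1
          apply Finset.sum_congr rfl
          intro i _; ring
      _ = (∑ j, lam0 j * (A j ⬝ᵥ xs - b j))
            + ∑ i, (bW.repr wv i) * (∑ j, lam0 j * (A j ⬝ᵥ (bW i : Fin n → ℝ))) := by
          rw [Finset.sum_add_distrib]
          congr 1
          rw [Finset.sum_comm]
          apply Finset.sum_congr rfl
          intro i _
          rw [Finset.mul_sum]
      _ = 0 := by
          rw [hlast]
          have : ∀ i : Fin k, ∑ j, lam0 j * (A j ⬝ᵥ (bW i : Fin n → ℝ)) = 0 := by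
            intro i
            have := hcoord (Fin.castSucc i)
            simpa only [hucast] using this
          simp only [this, mul_zero, Finset.sum_const_zero, add_zero, zero_add]
  · -- separation case: contradiction
    exfalso
    set s : ℝ := φ (Fin.last k) with hs
    set wv : W := ∑ i, φ (Fin.castSucc i) • bW i with hwv
    set w : Fin n → ℝ := (wv : Fin n → ℝ) with hw
    have hwdir : w ∈ W := wv.2
    have hwsum : w = ∑ i, φ (Fin.castSucc i) • (bW i : Fin n → ℝ) := by
      rw [hw, hwv]
      push_cast
      rfl
    have hdot : ∀ j, u j ⬝ᵥ φ = A j ⬝ᵥ w + (A j ⬝ᵥ xs - b j) * s := by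
      intro j
      rw [show u j ⬝ᵥ φ = ∑ q : Fin (k+1), u j q * φ q from rfl, Fin.sum_univ_castSucc]
      rw [hulast, hwsum, dotProduct_sum']
      congr 1
      apply Finset.sum_congr rfl
      intro i _
      rw [hucast, dotProduct_smul, smul_eq_mul]
      ring
    have hpos : 0 < A i0 ⬝ᵥ w := by
      have h1 : (-u i0) ⬝ᵥ φ = -(u i0 ⬝ᵥ φ) := by rw [neg_dotProduct]
      have h2 : 0 < u i0 ⬝ᵥ φ := by rw [h1] at hpφ; linarith
      rw [hdot i0, hi0] at h2
      linarith
    have hφj : ∀ j, 0 ≤ A j ⬝ᵥ w + (A j ⬝ᵥ xs - b j) * s := fun j => (hdot j) ▸ hφ j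
    clear hdot hwsum hφ hpφ hu hucast hulast
    clear_value w s u
    rcases le_or_gt s 0 with hsle | hsgt
    · -- ray case : y = xs + w
      have hAw : ∀ j, 0 ≤ A j ⬝ᵥ w := by
        intro j
        have h1 := hφj j
        have h2 : (A j ⬝ᵥ xs - b j) * s ≤ 0 :=
          mul_nonpos_of_nonneg_of_nonpos (hfeas j) hsle
        linarith
      have hyspan : xs + w ∈ affineSpan ℝ C := by
        have := AffineSubspace.vadd_mem_of_mem_direction (hW ▸ hwdir) hxsspan
        simpa [vadd_eq_add, add_comm] using this
      have hyfeas : ∀ j, 0 ≤ A j ⬝ᵥ (xs + w) - b j := by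
        intro j
        rw [dotProduct_add]
        have := hfeas j; have := hAw j
        linarith
      have := hext i0 hi0 (xs + w) hyspan hyfeas
      rw [dotProduct_add] at this
      have : A i0 ⬝ᵥ w = 0 := by have := hi0; linarith
      linarith
    · -- point case : y = xs + s⁻¹ • w
      have hyspan : xs + s⁻¹ • w ∈ affineSpan ℝ C := by
        have hmem : s⁻¹ • w ∈ W := Submodule.smul_mem _ _ hwdir
        have := AffineSubspace.vadd_mem_of_mem_direction (hW ▸ hmem) hxsspan
        simpa [vadd_eq_add, add_comm] using this
      have hyfeas : ∀ j, 0 ≤ A j ⬝ᵥ (xs + s⁻¹ • w) - b j := by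
        intro j
        rw [dotProduct_add, dotProduct_smul, smul_eq_mul]
        have h1 := hφj j
        have h2 : 0 ≤ s⁻¹ * (A j ⬝ᵥ w + (A j ⬝ᵥ xs - b j) * s) :=
          mul_nonneg (inv_nonneg.mpr hsgt.le) h1
        have h3 : s⁻¹ * (A j ⬝ᵥ w + (A j ⬝ᵥ xs - b j) * s)
            = s⁻¹ * (A j ⬝ᵥ w) + (A j ⬝ᵥ xs - b j) := by
          field_simp
        linarith
      have := hext i0 hi0 _ hyspan hyfeas
      rw [dotProduct_add, dotProduct_smul, smul_eq_mul] at this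
      have hw0 : A i0 ⬝ᵥ w = 0 := by
        have h3 : s⁻¹ ≠ 0 := inv_ne_zero (ne_of_gt hsgt)
        have h4 : s⁻¹ * (A i0 ⬝ᵥ w) = 0 := by linarith
        rcases mul_eq_zero.mp h4 with h | h
        · exact absurd h h3
        · exact h
      exact absurd hw0 (ne_of_gt hpos)
end vc
section sd
variable {m n : ℕ}
lemma strong_duality (A : Matrix (Fin m) (Fin n) ℝ) (b : Fin m → ℝ) (c : Fin n → ℝ)
    {C : Set (Fin n → ℝ)} (hC : Convex ℝ C) {xh : Fin n → ℝ}
    (hxh : xh ∈ intrinsicInterior ℝ C) (hfeas : ∀ j, 0 ≤ A j ⬝ᵥ xh - b j) (r : ℝ)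
    (hr : ∀ x ∈ C, (∀ j, 0 ≤ A j ⬝ᵥ x - b j) → r ≤ c ⬝ᵥ x) :
    ∃ lam : Fin m → ℝ, (∀ j, 0 ≤ lam j) ∧
      ∀ x ∈ C, ∑ j, lam j * (A j ⬝ᵥ x - b j) ≤ c ⬝ᵥ x - r := by
  classical
  obtain ⟨xs, hxs, hxsf, hmax⟩ := exists_maximal_slater A b hxh hfeas
  set E : Finset (Fin m) := Finset.univ.filter (fun i => A i ⬝ᵥ xs - b i = 0) with hE
  set S : Finset (Fin m) := Finset.univ.filter (fun i => 0 < A i ⬝ᵥ xs - b i) with hS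
  have hdisj : Disjoint E S := by
    rw [Finset.disjoint_left]
    intro i hiE hiS
    rw [hE, Finset.mem_filter] at hiE
    rw [hS, Finset.mem_filter] at hiS
    linarith [hiE.2, hiS.2]
  have hcover : ∀ j, j ∈ E ∨ j ∈ S := by
    intro j
    rcases (hxsf j).lt_or_eq with h | h
    · right; rw [hS, Finset.mem_filter]; exact ⟨Finset.mem_univ _, h⟩
    · left; rw [hE, Finset.mem_filter]; exact ⟨Finset.mem_univ _, h.symm⟩
  have hext : ∀ i, A i ⬝ᵥ xs - b i = 0 → ∀ y, y ∈ affineSpan ℝ C →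
      (∀ j, 0 ≤ A j ⬝ᵥ y - b j) → A i ⬝ᵥ y - b i = 0 := by
    intro i hi0 y hy hyf
    obtain ⟨t, ht0, ht1, hmem⟩ := smallStep hxs hy
    set z := xs + t • (y - xs) with hz
    have hzri : z ∈ intrinsicInterior ℝ C := hmem t ht0 le_rfl
    have hzval : ∀ j, A j ⬝ᵥ z - b j
        = (1 - t) * (A j ⬝ᵥ xs - b j) + t * (A j ⬝ᵥ y - b j) := fun j => dot_line _ _ _ _ _
    have hzfeas : ∀ j, 0 ≤ A j ⬝ᵥ z - b j := by
      intro j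
      rw [hzval j]
      have h1 := hxsf j; have h2 := hyf j
      nlinarith
    have hiz : A i ⬝ᵥ z - b i = 0 := by
      rcases (hzfeas i).lt_or_eq with h | h
      · exact absurd (hmax z hzri hzfeas i h) (by rw [hi0]; exact lt_irrefl 0)
      · exact h.symm
    rw [hzval i, hi0] at hiz
    have : t * (A i ⬝ᵥ y - b i) = 0 := by linarith
    rcases mul_eq_zero.mp this with h | h
    · exact absurd h (ne_of_gt ht0)
    · exact h
  -- peel off all constraints
  obtain ⟨lam, hlamS, _, hlamineq⟩ :=
    peel A b E S hdisj C hC c r xs hxs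
      (fun i hi => by rw [hE, Finset.mem_filter] at hi; exact hi.2)
      (fun j hj => by rw [hS, Finset.mem_filter] at hj; exact hj.2)
      (fun x hx hE' hS' => by
        rw [sub_nonneg]
        apply hr x hx
        intro j
        rcases hcover j with h | h
        · rw [hE' j h]
        · exact hS' j h)
  -- vanishing combinations for the degenerate constraints
  have hFex : ∀ i0 : Fin m, ∃ lam0 : Fin m → ℝ, (∀ j, 0 ≤ lam0 j) ∧
      (A i0 ⬝ᵥ xs - b i0 = 0 → 1 ≤ lam0 i0) ∧
      (∀ y, y ∈ affineSpan ℝ C → ∑ j, lam0 j * (A j ⬝ᵥ y - b j) = 0) := by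
    intro i0
    by_cases h : A i0 ⬝ᵥ xs - b i0 = 0
    · obtain ⟨l0, h1, h2, _, h4⟩ := vanishing_combo A b hxs hxsf hext i0 h
      exact ⟨l0, h1, fun _ => h2, h4⟩
    · exact ⟨0, fun j => le_refl _, fun hh => absurd hh h, fun y _ => by simp⟩
  choose F hF using hFex
  set t : ℝ := ∑ j ∈ E, max 0 (-lam j) with ht
  have ht0 : 0 ≤ t := Finset.sum_nonneg fun j _ => le_max_left _ _
  have htj : ∀ j ∈ E, max 0 (-lam j) ≤ t := by
    intro j hj
    rw [ht]
    exact Finset.single_le_sum (f := fun i => max 0 (-lam i)) (fun i _ => le_max_left _ _) hj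
  set Λ : Fin m → ℝ := fun j => ∑ i0 ∈ E, F i0 j with hΛ
  have hΛpos : ∀ j, 0 ≤ Λ j := fun j => Finset.sum_nonneg fun i0 _ => (hF i0).1 j
  have hΛE : ∀ j ∈ E, 1 ≤ Λ j := by
    intro j hj
    have hj0 : A j ⬝ᵥ xs - b j = 0 := by rw [hE, Finset.mem_filter] at hj; exact hj.2
    calc (1:ℝ) ≤ F j j := (hF j).2.1 hj0
      _ ≤ Λ j := Finset.single_le_sum (f := fun i0 => F i0 j)
          (fun i0 _ => (hF i0).1 j) hj
  have hΛspan : ∀ y, y ∈ affineSpan ℝ C → ∑ j, Λ j * (A j ⬝ᵥ y - b j) = 0 := by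
    intro y hy
    have : ∑ j, Λ j * (A j ⬝ᵥ y - b j)
        = ∑ i0 ∈ E, ∑ j, F i0 j * (A j ⬝ᵥ y - b j) := by
      rw [Finset.sum_comm]
      apply Finset.sum_congr rfl
      intro j _
      rw [hΛ, Finset.sum_mul]
    rw [this]
    apply Finset.sum_eq_zero
    intro i0 _
    exact (hF i0).2.2 y hy
  refine ⟨fun j => lam j + t * Λ j, ?_, ?_⟩
  · intro j
    show 0 ≤ lam j + t * Λ j
    rcases hcover j with h | h
    · have h1 := htj j h
      have h2 : t * 1 ≤ t * Λ j := mul_le_mul_of_nonneg_left (hΛE j h) ht0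
      have h3 := le_max_right 0 (-lam j)
      nlinarith
    · have h1 := hlamS j h
      have h2 : 0 ≤ t * Λ j := mul_nonneg ht0 (hΛpos j)
      linarith
  · intro x hx
    show ∑ j, (lam j + t * Λ j) * (A j ⬝ᵥ x - b j) ≤ c ⬝ᵥ x - r
    have hxspan : x ∈ affineSpan ℝ C := subset_affineSpan ℝ C hx
    have hsplit : ∑ j, (lam j + t * Λ j) * (A j ⬝ᵥ x - b j)
        = (∑ j, lam j * (A j ⬝ᵥ x - b j)) + t * ∑ j, Λ j * (A j ⬝ᵥ x - b j) := by
      rw [Finset.mul_sum, ← Finset.sum_add_distrib]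
      apply Finset.sum_congr rfl
      intro j _
      ring
    rw [hsplit, hΛspan x hxspan, mul_zero, add_zero]
    exact hlamineq x hx
end sd
section seg
variable {m n : ℕ}
lemma segment_closure {C : Set (Fin n → ℝ)} (hC : Convex ℝ C) {xh y : Fin n → ℝ}
    (hxh : xh ∈ intrinsicInterior ℝ C) (hy : y ∈ closure C) :
    ∀ t : ℝ, 0 ≤ t → t < 1 → xh + t • (y - xh) ∈ C := by
  intro t ht0 ht1
  rcases eq_or_lt_of_le ht0 with rfl | htpos
  · simpa using intrinsicInterior_subset hxh
  obtain ⟨hxhC, ε, hε, hball⟩ := riC_iff.mp hxh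
  have hxhspan : xh ∈ affineSpan ℝ C := subset_affineSpan ℝ C hxhC
  have hspan_closed : IsClosed (affineSpan ℝ C : Set (Fin n → ℝ)) :=
    AffineSubspace.closed_of_finiteDimensional _
  have hyspan : y ∈ affineSpan ℝ C := by
    have h1 : closure C ⊆ (affineSpan ℝ C : Set (Fin n → ℝ)) :=
      closure_minimal (subset_affineSpan ℝ C) hspan_closed
    exact h1 hy
  have h1t : (0:ℝ) < 1 - t := by linarith
  set δ : ℝ := (1 - t) * ε / 2 with hδ
  have hδ0 : 0 < δ := by rw [hδ]; exact div_pos (mul_pos h1t hε) two_pos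
  obtain ⟨yc, hycC, hycd⟩ := Metric.mem_closure_iff.mp hy (δ / t) (div_pos hδ0 htpos)
  set x'' : Fin n → ℝ := xh + (t / (1 - t)) • (y - yc) with hx''
  have hx''span : x'' ∈ affineSpan ℝ C := by
    have h1 : y - yc ∈ (affineSpan ℝ C).direction := by
      have := AffineSubspace.vsub_mem_direction hyspan (subset_affineSpan ℝ C hycC)
      simpa [vsub_eq_sub] using this
    have h2 : (t / (1 - t)) • (y - yc) ∈ (affineSpan ℝ C).direction :=
      Submodule.smul_mem _ _ h1
    have := AffineSubspace.vadd_mem_of_mem_direction h2 hxhspan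
    simpa [vadd_eq_add, add_comm] using this
  have hx''C : x'' ∈ C := by
    apply hball x'' hx''span
    rw [dist_eq_norm]
    have h1 : x'' - xh = (t / (1 - t)) • (y - yc) := by rw [hx'']; abel
    rw [h1, norm_smul]
    have h2 : ‖(t / (1 - t))‖ = t / (1 - t) := by
      rw [Real.norm_eq_abs, abs_of_pos (div_pos htpos h1t)]
    rw [h2]
    have h3 : ‖y - yc‖ = dist y yc := (dist_eq_norm y yc).symm
    rw [h3]
    have h4 : t / (1 - t) * dist y yc < t / (1 - t) * (δ / t) :=
      mul_lt_mul_of_pos_left hycd (div_pos htpos h1t)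
    have h5 : t / (1 - t) * (δ / t) = ε / 2 := by
      rw [hδ]
      field_simp
    linarith
  have hcomb : xh + t • (y - xh) = (1 - t) • x'' + t • yc := by
    rw [hx'']
    rw [smul_add, smul_smul, mul_div_cancel₀ _ (ne_of_gt h1t)]
    module
  rw [hcomb]
  exact hC hx''C hycC (by linarith) ht0 (by ring)

lemma ereal_le_of_forall_eps {a : EReal} {r : ℝ}
    (h : ∀ η : ℝ, 0 < η → a ≤ ((r + η : ℝ) : EReal)) : a ≤ (r : EReal) := by
  by_contra hlt
  push_neg at hlt
  obtain ⟨q, hq1, hq2⟩ := EReal.lt_iff_exists_real_btwn.mp hlt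
  have hq : r < q := by exact_mod_cast hq1
  have := h (q - r) (by linarith)
  have heq : r + (q - r) = q := by ring
  rw [heq] at this
  exact absurd (lt_of_le_of_lt this hq2) (lt_irrefl a)
end seg
theorem geoffrion_slater {m n : ℕ} (A : Matrix (Fin m) (Fin n) ℝ)
    (b : Fin m → ℝ) (c : Fin n → ℝ) (X : Set (Fin n → ℝ)) (hX : X.Nonempty)
    (hslater : (intrinsicInterior ℝ (convexHull ℝ X) ∩
      {x : Fin n → ℝ | b ≤ A.mulVec x}).Nonempty) :
    sSup ((fun lam =>
        sInf ((fun x => ((c ⬝ᵥ x + lam ⬝ᵥ (b - A.mulVec x) : ℝ) : EReal)) '' X)) ''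
          {lam : Fin m → ℝ | 0 ≤ lam}) =
      sInf ((fun x => ((c ⬝ᵥ x : ℝ) : EReal)) ''
        {x ∈ closure (convexHull ℝ X) | b ≤ A.mulVec x}) ∧
    sInf ((fun x => ((c ⬝ᵥ x : ℝ) : EReal)) ''
        {x ∈ closure (convexHull ℝ X) | b ≤ A.mulVec x}) =
      sInf ((fun x => ((c ⬝ᵥ x : ℝ) : EReal)) ''
        {x ∈ convexHull ℝ X | b ≤ A.mulVec x}) := by
  classical
  obtain ⟨xh, hxhri, hxhfeas'⟩ := hslater
  have hxhfeasle : b ≤ A.mulVec xh := hxhfeas'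
  set C : Set (Fin n → ℝ) := convexHull ℝ X with hCdef
  have hC : Convex ℝ C := convex_convexHull ℝ X
  have hfeas_iff : ∀ x : Fin n → ℝ, b ≤ A.mulVec x ↔ ∀ j, 0 ≤ A j ⬝ᵥ x - b j := by
    intro x
    constructor
    · intro h j
      have := h j
      have h2 : A.mulVec x j = A j ⬝ᵥ x := rfl
      rw [h2] at this
      linarith
    · intro h j
      have := h j
      have h2 : A.mulVec x j = A j ⬝ᵥ x := rfl
      rw [h2]
      linarith
  have hxhfeas : ∀ j, 0 ≤ A j ⬝ᵥ xh - b j := (hfeas_iff xh).mp hxhfeasle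
  have hxhC : xh ∈ C := intrinsicInterior_subset hxhri
  set obj : (Fin n → ℝ) → EReal := fun x => ((c ⬝ᵥ x : ℝ) : EReal) with hobj
  set SB : Set (Fin n → ℝ) := {x ∈ closure C | b ≤ A.mulVec x} with hSB
  set SV : Set (Fin n → ℝ) := {x ∈ C | b ≤ A.mulVec x} with hSV
  set dual : (Fin m → ℝ) → EReal := fun lam =>
    sInf ((fun x => ((c ⬝ᵥ x + lam ⬝ᵥ (b - A.mulVec x) : ℝ) : EReal)) '' X) with hdual
  -- Part 2 : sInf over SB = sInf over SV
  have part2 : sInf (obj '' SB) = sInf (obj '' SV) := by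
    apply le_antisymm
    · apply le_sInf
      rintro z ⟨y, hySV, rfl⟩
      exact sInf_le ⟨y, ⟨subset_closure hySV.1, hySV.2⟩, rfl⟩
    · apply le_sInf
      rintro z ⟨y, hySB, rfl⟩
      have hyfeas : ∀ j, 0 ≤ A j ⬝ᵥ y - b j := (hfeas_iff y).mp hySB.2
      apply ereal_le_of_forall_eps
      intro η hη
      set M : ℝ := |c ⬝ᵥ xh - c ⬝ᵥ y| with hM
      have hM0 : 0 ≤ M := abs_nonneg _
      set t : ℝ := 1 - min 1 (η / (M + 1)) with htdef
      have hmin0 : 0 < min 1 (η / (M + 1)) := lt_min one_pos (by positivity)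
      have hmin1 : min 1 (η / (M + 1)) ≤ 1 := min_le_left _ _
      have ht0 : 0 ≤ t := by rw [htdef]; linarith
      have ht1 : t < 1 := by rw [htdef]; linarith
      set zt := xh + t • (y - xh) with hzt
      have hztC : zt ∈ C := segment_closure hC hxhri hySB.1 t ht0 ht1
      have hztfeas : ∀ j, 0 ≤ A j ⬝ᵥ zt - b j := by
        intro j
        rw [hzt, dot_line]
        have h1 := hxhfeas j; have h2 := hyfeas j
        nlinarith
      have hztSV : zt ∈ SV := ⟨hztC, (hfeas_iff zt).mpr hztfeas⟩
      have hcval : c ⬝ᵥ zt = c ⬝ᵥ y + (1 - t) * (c ⬝ᵥ xh - c ⬝ᵥ y) := by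
        rw [hzt, dotProduct_add, dotProduct_smul, dotProduct_sub]
        simp only [smul_eq_mul]
        ring
      have hbound : c ⬝ᵥ zt ≤ c ⬝ᵥ y + η := by
        rw [hcval]
        have h1 : 1 - t = min 1 (η / (M + 1)) := by rw [htdef]; ring
        have h2 : min 1 (η / (M + 1)) ≤ η / (M + 1) := min_le_right _ _
        have h3 : c ⬝ᵥ xh - c ⬝ᵥ y ≤ M := le_abs_self _
        have h4 : (1 - t) * (c ⬝ᵥ xh - c ⬝ᵥ y) ≤ η := by
          rcases le_or_gt (c ⬝ᵥ xh - c ⬝ᵥ y) 0 with h | h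
          · have := mul_nonpos_of_nonneg_of_nonpos (by linarith : (0:ℝ) ≤ 1 - t) h
            linarith
          · have h5 : (1 - t) * (c ⬝ᵥ xh - c ⬝ᵥ y) ≤ (η / (M + 1)) * (M + 1) := by
              apply mul_le_mul (by rw [h1]; exact h2) (by linarith) h.le (by positivity)
            rw [div_mul_cancel₀ _ (by positivity : (M:ℝ) + 1 ≠ 0)] at h5
            exact h5
        linarith
      calc sInf (obj '' SV) ≤ obj zt := sInf_le ⟨zt, hztSV, rfl⟩
        _ ≤ ((c ⬝ᵥ y + η : ℝ) : EReal) := by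
            show ((c ⬝ᵥ zt : ℝ) : EReal) ≤ ((c ⬝ᵥ y + η : ℝ) : EReal)
            exact_mod_cast hbound
  -- weak duality : dual value ≤ sInf over SB
  have weak : sSup (dual '' {lam : Fin m → ℝ | 0 ≤ lam}) ≤ sInf (obj '' SB) := by
    apply sSup_le
    rintro e ⟨lam, hlammem, rfl⟩
    have hlam0 : ∀ j, 0 ≤ lam j := fun j => hlammem j
    apply le_sInf
    rintro z ⟨y, hySB, rfl⟩
    by_cases hbot : dual lam = ⊥
    · rw [hbot]; exact bot_le
    obtain ⟨x0, hx0⟩ := hX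
    have hle0 : dual lam ≤ ((c ⬝ᵥ x0 + lam ⬝ᵥ (b - A.mulVec x0) : ℝ) : EReal) :=
      sInf_le ⟨x0, hx0, rfl⟩
    have htop : dual lam ≠ ⊤ := ne_top_of_le_ne_top (EReal.coe_ne_top _) hle0
    set d : ℝ := (dual lam).toReal with hd
    have hdeq : ((d : ℝ) : EReal) = dual lam := EReal.coe_toReal htop hbot
    set Z : Set (Fin n → ℝ) := {z | d - lam ⬝ᵥ b ≤ (c - lam ᵥ* A) ⬝ᵥ z} with hZ
    have hLexp : ∀ z : Fin n → ℝ,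
        c ⬝ᵥ z + lam ⬝ᵥ (b - A.mulVec z) = (c - lam ᵥ* A) ⬝ᵥ z + lam ⬝ᵥ b := by
      intro z
      rw [dotProduct_sub, dotProduct_mulVec, sub_dotProduct]
      ring
    have hXZ : X ⊆ Z := by
      intro x hx
      have h1 : dual lam ≤ ((c ⬝ᵥ x + lam ⬝ᵥ (b - A.mulVec x) : ℝ) : EReal) :=
        sInf_le ⟨x, hx, rfl⟩
      rw [← hdeq] at h1
      have h2 : d ≤ c ⬝ᵥ x + lam ⬝ᵥ (b - A.mulVec x) := by exact_mod_cast h1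
      rw [hLexp x] at h2
      show d - lam ⬝ᵥ b ≤ (c - lam ᵥ* A) ⬝ᵥ x
      linarith
    have hZconv : Convex ℝ Z := convex_halfSpace_ge (dot_lin _) _
    have hZclosed : IsClosed Z := by
      have : Continuous (fun z : Fin n → ℝ => (c - lam ᵥ* A) ⬝ᵥ z) := by
        unfold dotProduct
        exact continuous_finset_sum _ fun i _ => continuous_const.mul (continuous_apply i)
      exact isClosed_le continuous_const this
    have hyZ : y ∈ Z :=
      closure_minimal (convexHull_min hXZ hZconv) hZclosed hySB.1
    have hLy : d ≤ c ⬝ᵥ y + lam ⬝ᵥ (b - A.mulVec y) := by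
      rw [hLexp y]
      have := hyZ
      rw [hZ] at this
      simp only [Set.mem_setOf_eq] at this
      linarith
    have hpen : lam ⬝ᵥ (b - A.mulVec y) ≤ 0 := by
      apply Finset.sum_nonpos
      intro j _
      apply mul_nonpos_of_nonneg_of_nonpos (hlam0 j)
      have := hySB.2 j
      simp only [Pi.sub_apply]
      linarith
    show dual lam ≤ ((c ⬝ᵥ y : ℝ) : EReal)
    rw [← hdeq]
    exact EReal.coe_le_coe_iff.mpr (by linarith)
  -- conclude
  have hxhSV : xh ∈ SV := ⟨hxhC, hxhfeasle⟩
  have hvtop : sInf (obj '' SV) ≠ ⊤ :=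
    ne_top_of_le_ne_top (EReal.coe_ne_top _) (sInf_le ⟨xh, hxhSV, rfl⟩)
  by_cases hvbot : sInf (obj '' SV) = ⊥
  · refine ⟨le_antisymm weak ?_, part2⟩
    rw [part2, hvbot]
    exact bot_le
  · set r : ℝ := (sInf (obj '' SV)).toReal with hrdef
    have hreq : ((r : ℝ) : EReal) = sInf (obj '' SV) := EReal.coe_toReal hvtop hvbot
    have hr : ∀ x ∈ C, (∀ j, 0 ≤ A j ⬝ᵥ x - b j) → r ≤ c ⬝ᵥ x := by
      intro x hx hfx
      have h1 : sInf (obj '' SV) ≤ obj x := sInf_le ⟨x, ⟨hx, (hfeas_iff x).mpr hfx⟩, rfl⟩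
      rw [← hreq] at h1
      have h2 : ((r:ℝ):EReal) ≤ ((c ⬝ᵥ x : ℝ):EReal) := h1
      exact_mod_cast h2
    obtain ⟨lam, hlam0, hlamineq⟩ := strong_duality A b c hC hxhri hxhfeas r hr
    have hpen : ∀ x : Fin n → ℝ, lam ⬝ᵥ (b - A.mulVec x) = -∑ j, lam j * (A j ⬝ᵥ x - b j) := by
      intro x
      show ∑ j, lam j * (b - A.mulVec x) j = _
      rw [← Finset.sum_neg_distrib]
      apply Finset.sum_congr rfl
      intro j _
      simp only [Pi.sub_apply]
      have h2 : A.mulVec x j = A j ⬝ᵥ x := rfl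
      rw [h2]
      ring
    have hdual_ge : ((r : ℝ) : EReal) ≤ dual lam := by
      apply le_sInf
      rintro z ⟨x, hxX, rfl⟩
      have hxC : x ∈ C := subset_convexHull ℝ X hxX
      have h1 := hlamineq x hxC
      have h2 : r ≤ c ⬝ᵥ x + lam ⬝ᵥ (b - A.mulVec x) := by
        rw [hpen x]
        linarith
      show ((r:ℝ):EReal) ≤ ((c ⬝ᵥ x + lam ⬝ᵥ (b - A.mulVec x) : ℝ):EReal)
      exact_mod_cast h2
    have hlammem : lam ∈ {lam : Fin m → ℝ | 0 ≤ lam} := by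
      intro j
      exact hlam0 j
    have hvL_ge : ((r : ℝ) : EReal) ≤ sSup (dual '' {lam : Fin m → ℝ | 0 ≤ lam}) :=
      le_trans hdual_ge (le_sSup ⟨lam, hlammem, rfl⟩)
    refine ⟨le_antisymm weak ?_, part2⟩
    rw [part2, ← hreq]
    exact hvL_ge
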